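/- For any L ≥ 0, any p ∈ ℝ^n with |p| ≤ L, and any symmetric matrix H ∈ ℝ^{n×n}, setting v = p/√(1+|p|²), one has 3|H|² - 2|Hv|² - (v·Hv)² ≥ ((3+4L²)/(1+L²)²)|H|². -/
import Mathlib


/-- For `|p| ≤ L`, `v = p / √(1+|p|²)` and a symmetric matrix `H`:
`3|H|² - 2|Hv|² - (v·Hv)² ≥ ((3+4L²)/(1+L²)²)|H|²`. -/
theorem stmt_3 {n : ℕ} (L : ℝ) (hL : 0 ≤ L) (p : Fin n → ℝ)
    (hp : Real.sqrt (∑ i, (p i) ^ 2) ≤ L)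
    (H : Matrix (Fin n) (Fin n) ℝ) (hH : H.IsSymm) :
    let Q : ℝ := Real.sqrt (1 + ∑ i, (p i) ^ 2)
    let v : Fin n → ℝ := fun i => p i / Q
    ((3 + 4 * L ^ 2) / (1 + L ^ 2) ^ 2) * (∑ i, ∑ j, (H i j) ^ 2)
      ≤ 3 * (∑ i, ∑ j, (H i j) ^ 2) - 2 * (∑ i, (∑ j, H i j * v j) ^ 2)
        - (∑ i, v i * ∑ j, H i j * v j) ^ 2 := by
  intro Q v
  set S := ∑ i, (p i) ^ 2 with hSdef
  have hS0 : 0 ≤ S := Finset.sum_nonneg fun i _ => sq_nonneg _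
  have hSL : S ≤ L ^ 2 := by
    nlinarith [Real.sq_sqrt hS0, Real.sqrt_nonneg S]
  have h1S : (0:ℝ) < 1 + S := by linarith
  have hQ2 : Q ^ 2 = 1 + S := Real.sq_sqrt (by linarith)
  have hQ0 : 0 < Q := Real.sqrt_pos.mpr h1S
  set A := ∑ i, ∑ j, (H i j) ^ 2 with hAdef
  have hA0 : 0 ≤ A := Finset.sum_nonneg fun i _ => Finset.sum_nonneg fun j _ => sq_nonneg _
  set w : Fin n → ℝ := fun i => ∑ j, H i j * v j with hwdef
  set B := ∑ i, (w i) ^ 2 with hBdef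
  have hB0 : 0 ≤ B := Finset.sum_nonneg fun i _ => sq_nonneg _
  set t := S / (1 + S) with htdef
  have ht0 : 0 ≤ t := div_nonneg hS0 h1S.le
  have hvt : ∑ j, (v j) ^ 2 = t := by
    simp only [v, div_pow, hQ2]
    rw [← Finset.sum_div]
  have hB : B ≤ t * A := by
    rw [hBdef, hAdef, mul_comm, Finset.sum_mul]
    refine Finset.sum_le_sum fun i _ => ?_
    calc (w i) ^ 2 ≤ (∑ j, (H i j) ^ 2) * ∑ j, (v j) ^ 2 :=
          Finset.sum_mul_sq_le_sq_mul_sq _ _ _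
      _ = (∑ j, (H i j) ^ 2) * t := by rw [hvt]
  have hC : (∑ i, v i * w i) ^ 2 ≤ t * B := by
    calc (∑ i, v i * w i) ^ 2 ≤ (∑ i, (v i) ^ 2) * ∑ i, (w i) ^ 2 :=
          Finset.sum_mul_sq_le_sq_mul_sq _ _ _
      _ = t * B := by rw [hvt]
  have hteq : 3 - 2 * t - t ^ 2 = (3 + 4 * S) / (1 + S) ^ 2 := by
    rw [htdef]
    field_simp
    ring
  have key : (3 + 4 * L ^ 2) / (1 + L ^ 2) ^ 2 ≤ 3 - 2 * t - t ^ 2 := by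
    rw [hteq, div_le_div_iff₀ (by positivity) (by positivity)]
    nlinarith [mul_nonneg (mul_nonneg hS0 hS0) (sub_nonneg.2 hSL),
      mul_nonneg hS0 (sub_nonneg.2 hSL), mul_nonneg (sub_nonneg.2 hSL) hS0]
  nlinarith [mul_le_mul_of_nonneg_left hB (by linarith : (0:ℝ) ≤ 2 + t),
    mul_le_mul_of_nonneg_right key hA0, hC, hB0, ht0]
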